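/- arXiv:2007.06724 — 3 statements merged into one kernel-verified Lean document; each statement's English description precedes it below -/
import Mathlib

section
/- Let U ⊆ ℂ be open, z₀ ∈ U, and let f : U \ {z₀} → ℂ be holomorphic and injective on U \ {z₀}, with |f(z)| → ∞ as z → z₀. Then f has a pole of order exactly one at z₀: the function z ↦ (z − z₀)·f(z) extends to a holomorphic function on a neighborhood of z₀ in U whose value at z₀ is nonzero. -/
open Filter Topology

/-- An injective holomorphic function on a punctured neighborhood that blows up at the
puncture has a pole of order exactly one there: `(z - z₀) * f z` extends holomorphically
across `z₀` with nonzero value at `z₀`. -/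
theorem injective_holomorphic_simple_pole
    (U : Set ℂ) (hU : IsOpen U) (z₀ : ℂ) (hz₀ : z₀ ∈ U) (f : ℂ → ℂ)
    (hf : DifferentiableOn ℂ f (U \ {z₀})) (hinj : Set.InjOn f (U \ {z₀}))
    (hpole : Filter.Tendsto (fun z => ‖f z‖) (𝓝[U \ {z₀}] z₀) Filter.atTop) :
    ∃ g : ℂ → ℂ, ∃ V : Set ℂ, IsOpen V ∧ z₀ ∈ V ∧ V ⊆ U ∧
      DifferentiableOn ℂ g V ∧ g z₀ ≠ 0 ∧
      ∀ z ∈ V, z ≠ z₀ → g z = (z - z₀) * f z := by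
  -- The punctured-within filter is the full punctured filter since `U` is open.
  have hfilter : 𝓝[U \ {z₀}] z₀ = 𝓝[≠] z₀ := by
    rw [Set.diff_eq, Set.inter_comm, ← nhdsWithin_restrict' _ (hU.mem_nhds hz₀)]
  rw [hfilter] at hpole
  -- `f⁻¹` tends to `0` at `z₀`.
  have hinv0 : Tendsto (fun z => (f z)⁻¹) (𝓝[≠] z₀) (𝓝 0) := by
    rw [tendsto_zero_iff_norm_tendsto_zero]
    simp only [norm_inv]
    exact hpole.inv_tendsto_atTop
  -- Choose a ball inside `U` on which `|f| ≥ 1`.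
  have h1 : ∀ᶠ z in 𝓝[≠] z₀, 1 ≤ ‖f z‖ := hpole.eventually_ge_atTop 1
  obtain ⟨r, hr0, hrU, hrf⟩ : ∃ r > 0, Metric.ball z₀ r ⊆ U ∧
      ∀ z ∈ Metric.ball z₀ r \ {z₀}, 1 ≤ ‖f z‖ := by
    rw [eventually_nhdsWithin_iff] at h1
    obtain ⟨r₁, hr₁, h₁⟩ := Metric.eventually_nhds_iff_ball.mp h1
    obtain ⟨r₂, hr₂, h₂⟩ := Metric.isOpen_iff.mp hU z₀ hz₀
    exact ⟨min r₁ r₂, lt_min hr₁ hr₂,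
      fun z hz => h₂ (Metric.ball_subset_ball (min_le_right _ _) hz),
      fun z hz => h₁ z (Metric.ball_subset_ball (min_le_left _ _) hz.1) hz.2⟩
  have hball : Metric.ball z₀ r ∈ 𝓝 z₀ := Metric.ball_mem_nhds _ hr0
  have hfne : ∀ z ∈ Metric.ball z₀ r \ {z₀}, f z ≠ 0 := by
    intro z hz hz0
    have := hrf z hz
    rw [hz0] at this
    simp only [norm_zero] at this
    linarith
  have hsub : Metric.ball z₀ r \ {z₀} ⊆ U \ {z₀} := fun z hz => ⟨hrU hz.1, hz.2⟩
  -- Extend `f⁻¹` across `z₀` by `0`.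
  set h : ℂ → ℂ := Function.update (fun z => (f z)⁻¹) z₀ 0 with hh
  have hlim : limUnder (𝓝[≠] z₀) (fun z => (f z)⁻¹) = (0 : ℂ) := hinv0.limUnder_eq
  have hdp : DifferentiableOn ℂ (fun z => (f z)⁻¹) (Metric.ball z₀ r \ {z₀}) :=
    (hf.mono hsub).inv (fun z hz => hfne z hz)
  have hbdd : BddAbove (norm ∘ (fun z => (f z)⁻¹) '' (Metric.ball z₀ r \ {z₀})) := by
    refine ⟨1, fun x hx => ?_⟩
    obtain ⟨z, hz, rfl⟩ := hx
    simp only [Function.comp_apply, norm_inv]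
    exact inv_le_one_of_one_le₀ (hrf z hz)
  have hH : DifferentiableOn ℂ h (Metric.ball z₀ r) := by
    have := Complex.differentiableOn_update_limUnder_of_bddAbove hball hdp hbdd
    rwa [hlim] at this
  have hhz₀ : h z₀ = 0 := Function.update_self _ _ _
  have hhne : ∀ z, z ≠ z₀ → h z = (f z)⁻¹ := fun z hz => Function.update_of_ne hz _ _
  -- `h` is injective and nonvanishing on the punctured ball.
  have hinjh : Set.InjOn h (Metric.ball z₀ r \ {z₀}) := by
    intro x hx y hy hxy
    rw [hhne x hx.2, hhne y hy.2] at hxy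
    exact hinj (hsub hx) (hsub hy) (inv_injective hxy)
  have hhne0 : ∀ z ∈ Metric.ball z₀ r \ {z₀}, h z ≠ 0 := by
    intro z hz
    rw [hhne z hz.2]
    exact inv_ne_zero (hfne z hz)
  have hA : AnalyticAt ℂ h z₀ := hH.analyticAt hball
  -- The order of vanishing of `h` at `z₀` is a finite natural number `n ≥ 1`.
  have hne_top : analyticOrderAt h z₀ ≠ ⊤ := by
    intro htop
    rw [analyticOrderAt_eq_top] at htop
    have : ∀ᶠ z in 𝓝[≠] z₀, h z = 0 ∧ z ∈ Metric.ball z₀ r ∧ z ≠ z₀ := by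
      filter_upwards [nhdsWithin_le_nhds htop, nhdsWithin_le_nhds hball,
        self_mem_nhdsWithin] with z ha hb hc
      exact ⟨ha, hb, hc⟩
    obtain ⟨z, hz0, hzb, hzz⟩ := this.exists
    exact hhne0 z ⟨hzb, hzz⟩ hz0
  obtain ⟨n, hn⟩ : ∃ n : ℕ, analyticOrderAt h z₀ = n := by
    lift analyticOrderAt h z₀ to ℕ using hne_top with n hn
    exact ⟨n, rfl⟩
  obtain ⟨g, hg, hg0, heq⟩ := (hA.analyticOrderAt_eq_natCast (n := n)).mp hn
  have hn0 : n ≠ 0 := by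
    rintro rfl
    have h0 := heq.self_of_nhds
    rw [hhz₀] at h0
    simp only [pow_zero, one_smul] at h0
    exact hg0 h0.symm
  have hgne : ∀ᶠ z in 𝓝 z₀, g z ≠ 0 := hg.continuousAt.eventually_ne hg0
  -- The key step: injectivity forces `n = 1`.
  have hn1 : n = 1 := by
    by_contra hne1
    have hn2 : 2 ≤ n := by omega
    -- construct an analytic `n`-th root `ψ` of `g` near `z₀`
    set b := Complex.exp (Complex.log (g z₀) / n) with hbdef
    have hb0 : b ≠ 0 := Complex.exp_ne_zero _
    have hnC : (n : ℂ) ≠ 0 := Nat.cast_ne_zero.mpr hn0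
    have hbn : b ^ n = g z₀ := by
      rw [hbdef, ← Complex.exp_nat_mul, mul_div_cancel₀ _ hnC, Complex.exp_log hg0]
    set ψ : ℂ → ℂ := fun z => b * Complex.exp (Complex.log (g z / g z₀) / n) with hψdef
    have hψa : AnalyticAt ℂ ψ z₀ := by
      have h1 : AnalyticAt ℂ (fun z => g z / g z₀) z₀ := hg.div analyticAt_const hg0
      have h2 : AnalyticAt ℂ (fun z => Complex.log (g z / g z₀)) z₀ := by
        apply h1.clog
        simp [div_self hg0]
      exact analyticAt_const.mul ((h2.div analyticAt_const hnC).cexp)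
    have hψ0 : ψ z₀ = b := by
      simp [hψdef, div_self hg0, Complex.log_one]
    have hψpow : ∀ᶠ z in 𝓝 z₀, ψ z ^ n = g z := by
      filter_upwards [hgne] with z hz
      have hdz : g z / g z₀ ≠ 0 := div_ne_zero hz hg0
      rw [hψdef]
      simp only
      rw [mul_pow, hbn, ← Complex.exp_nat_mul, mul_div_cancel₀ _ hnC, Complex.exp_log hdz,
        mul_div_cancel₀ _ hg0]
    -- the analytic function `φ z = (z - z₀) * ψ z` with `φ'(z₀) = b ≠ 0`
    set φ : ℂ → ℂ := fun z => (z - z₀) * ψ z with hφdef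
    have hφ0 : φ z₀ = 0 := by simp [hφdef]
    have hφa : AnalyticAt ℂ φ z₀ := (analyticAt_id.sub analyticAt_const).mul hψa
    have hφd : HasDerivAt φ b z₀ := by
      have h1 : HasDerivAt (fun z : ℂ => z - z₀) 1 z₀ := (hasDerivAt_id z₀).sub_const z₀
      have h2 : HasDerivAt ψ (deriv ψ z₀) z₀ := hψa.differentiableAt.hasDerivAt
      have : HasDerivAt (fun z => (z - z₀) * ψ z) (1 * ψ z₀ + (z₀ - z₀) * deriv ψ z₀) z₀ :=
        h1.mul h2
      simpa [hψ0] using this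
    obtain ⟨p, hp⟩ := hφa
    have hsφ : HasStrictDerivAt φ b z₀ := by
      have hs := hp.hasStrictDerivAt
      rwa [hs.hasDerivAt.unique hφd] at hs
    have hmap : Filter.map φ (𝓝 z₀) = 𝓝 0 := by
      simpa [hφ0] using hsφ.map_nhds_eq hb0
    -- eventually `h = φ ^ n`
    have heq' : ∀ᶠ z in 𝓝 z₀, h z = φ z ^ n := by
      filter_upwards [heq, hψpow] with z ha hb'
      rw [ha, hφdef]
      simp only
      rw [mul_pow, hb', smul_eq_mul]
    have hSmem : {z | h z = φ z ^ n ∧ z ∈ Metric.ball z₀ r} ∈ 𝓝 z₀ := by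
      filter_upwards [heq', hball] with z ha hb'
      exact ⟨ha, hb'⟩
    set s := {z | h z = φ z ^ n ∧ z ∈ Metric.ball z₀ r} with hsdef
    have hsimg : φ '' s ∈ 𝓝 (0 : ℂ) := by
      rw [← hmap, mem_map]
      exact mem_of_superset hSmem (Set.subset_preimage_image φ s)
    -- a primitive `n`-th root of unity
    set ω := Complex.exp (2 * Real.pi * Complex.I / n) with hωdef
    have h2πI : (2 * Real.pi * Complex.I : ℂ) ≠ 0 := by
      simp [Real.pi_ne_zero, Complex.I_ne_zero]
    have hω1 : ω ≠ 1 := by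
      rw [hωdef, Ne, Complex.exp_eq_one_iff]
      rintro ⟨k, hk⟩
      rw [div_eq_iff hnC] at hk
      have hkey : ((k : ℂ) * n - 1) * (2 * Real.pi * Complex.I) = 0 := by
        linear_combination -hk
      have hkn : (k : ℂ) * n = 1 := by
        rcases mul_eq_zero.mp hkey with h' | h'
        · exact sub_eq_zero.mp h'
        · exact absurd h' h2πI
      have hknZ : (k * n : ℤ) = 1 := by exact_mod_cast hkn
      have : (n : ℤ) ∣ 1 := Dvd.intro_left k hknZ
      have := Int.le_of_dvd one_pos this
      omega
    have hωn : ω ^ n = 1 := by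
      rw [hωdef, ← Complex.exp_nat_mul, mul_div_cancel₀ _ hnC, Complex.exp_two_pi_mul_I]
    have hωne : ω ≠ 0 := Complex.exp_ne_zero _
    -- find `ζ ≠ 0` with both `ζ` and `ω * ζ` in `φ '' s`
    have hmul : Tendsto (fun ζ : ℂ => ω * ζ) (𝓝 0) (𝓝 0) := by
      have hc : Tendsto (fun ζ : ℂ => ω * id ζ) (𝓝 0) (𝓝 (ω * id 0)) :=
        (continuous_const.mul continuous_id).tendsto (0 : ℂ)
      simpa using hc
    have hTmem : φ '' s ∩ (fun ζ => ω * ζ) ⁻¹' (φ '' s) ∈ 𝓝 (0 : ℂ) :=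
      Filter.inter_mem hsimg (hmul hsimg)
    obtain ⟨ζ, hζT, hζ0⟩ :
        ∃ ζ, ζ ∈ φ '' s ∩ (fun ζ => ω * ζ) ⁻¹' (φ '' s) ∧ ζ ≠ (0 : ℂ) := by
      have hev : ∀ᶠ ζ in 𝓝[≠] (0 : ℂ), ζ ∈ φ '' s ∩ (fun ζ => ω * ζ) ⁻¹' (φ '' s) :=
        eventually_mem_set.mpr (mem_nhdsWithin_of_mem_nhds hTmem)
      obtain ⟨ζ, ha, hb'⟩ := (hev.and self_mem_nhdsWithin).exists
      exact ⟨ζ, ha, hb'⟩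
    obtain ⟨⟨z₁, hz₁s, hz₁⟩, z₂, hz₂s, hz₂⟩ := hζT
    have hz₁ne : z₁ ≠ z₀ := by
      intro hzz; rw [hzz, hφ0] at hz₁; exact hζ0 hz₁.symm
    have hz₂ne : z₂ ≠ z₀ := by
      intro hzz; rw [hzz, hφ0] at hz₂
      exact mul_ne_zero hωne hζ0 hz₂.symm
    have hhz : h z₁ = h z₂ := by
      rw [hz₁s.1, hz₂s.1, hz₁, hz₂, mul_pow, hωn, one_mul]
    have hzz : z₁ = z₂ := hinjh ⟨hz₁s.2, hz₁ne⟩ ⟨hz₂s.2, hz₂ne⟩ hhz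
    rw [hzz, hz₂] at hz₁
    exact hω1 (mul_left_injective₀ hζ0 (by simpa using hz₁))
  -- Now `n = 1`: conclude.
  subst hn1
  have hall : ∀ᶠ z in 𝓝 z₀,
      (h z = (z - z₀) ^ 1 • g z ∧ AnalyticAt ℂ g z) ∧ g z ≠ 0 ∧ z ∈ Metric.ball z₀ r := by
    filter_upwards [heq, hg.eventually_analyticAt, hgne, hball] with z a b' c d
    exact ⟨⟨a, b'⟩, c, d⟩
  obtain ⟨V, hVsub, hVopen, hVz⟩ := eventually_nhds_iff.mp hall
  refine ⟨fun z => (g z)⁻¹, V, hVopen, hVz, fun z hz => hrU (hVsub z hz).2.2, ?_,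
    inv_ne_zero hg0, ?_⟩
  · intro z hz
    exact (((hVsub z hz).1.2).inv (hVsub z hz).2.1).differentiableAt.differentiableWithinAt
  · intro z hz hzz
    obtain ⟨⟨hzeq, -⟩, hgz, hzb⟩ := hVsub z hz
    have hfz : f z ≠ 0 := hfne z ⟨hzb, hzz⟩
    have hzsub : z - z₀ ≠ 0 := sub_ne_zero.mpr hzz
    have hinv : (f z)⁻¹ = (z - z₀) * g z := by
      rw [← hhne z hzz, hzeq, pow_one, smul_eq_mul]
    have hfz' : f z = ((z - z₀) * g z)⁻¹ := by rw [← hinv, inv_inv]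
    rw [hfz', mul_inv, ← mul_assoc, mul_inv_cancel₀ hzsub, one_mul]
end

section
/- Let U ⊆ ℂ be open, let a, b ∈ U with a ≠ b, and let f be holomorphic and injective on U \ {a, b}. Then it cannot happen that both |f(z)| → ∞ as z → a and |f(z)| → ∞ as z → b. -/
open Filter Topology

/-- If `f` is holomorphic on a punctured open set, bounded below by 1 in modulus, and blows up
at the puncture, then `f` attains every value of sufficiently large modulus. -/
lemma surj_of_pole (s : Set ℂ) (hs : IsOpen s) (c : ℂ) (hc : c ∈ s) (f : ℂ → ℂ)
    (hf : DifferentiableOn ℂ f (s \ {c}))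
    (hb : ∀ z ∈ s \ {c}, 1 ≤ ‖f z‖)
    (htend : Filter.Tendsto (fun z => ‖f z‖) (𝓝[s \ {c}] c) Filter.atTop) :
    ∃ M : ℝ, ∀ w : ℂ, M < ‖w‖ → ∃ z ∈ s \ {c}, f z = w := by
  set g : ℂ → ℂ := Function.update (fun z => (f z)⁻¹) c 0 with hg
  have hfne : ∀ z ∈ s \ {c}, f z ≠ 0 := by
    intro z hz h0
    have := hb z hz
    simp [h0] at this
    linarith
  have hgeq : ∀ z ∈ s \ {c}, g z = (f z)⁻¹ := by
    intro z hz
    simp [hg, Function.update_of_ne hz.2]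
  have hnwe : 𝓝[({c}ᶜ : Set ℂ)] c = 𝓝[s \ {c}] c := by
    rw [nhdsWithin_restrict' ({c}ᶜ : Set ℂ) (hs.mem_nhds hc)]
    congr 1
    ext z; simp [Set.mem_diff, and_comm]
  have htend0 : Filter.Tendsto g (𝓝[s \ {c}] c) (𝓝 0) := by
    have h1 : Filter.Tendsto (fun z => ‖f z‖⁻¹) (𝓝[s \ {c}] c) (𝓝 0) :=
      tendsto_inv_atTop_zero.comp htend
    rw [tendsto_zero_iff_norm_tendsto_zero]
    apply h1.congr'
    filter_upwards [self_mem_nhdsWithin] with z hz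
    rw [hgeq z hz]
    simp
  have hgd : DifferentiableOn ℂ g s := by
    rw [← Complex.differentiableOn_compl_singleton_and_continuousAt_iff (hs.mem_nhds hc)]
    constructor
    · apply DifferentiableOn.congr (hf.inv hfne) hgeq
    · rw [← continuousWithinAt_compl_self]
      unfold ContinuousWithinAt
      rw [hnwe]
      have : g c = 0 := by simp [hg]
      rw [this]
      exact htend0
  have hga : AnalyticAt ℂ g c := hgd.analyticAt (hs.mem_nhds hc)
  have hne : ¬ (∀ᶠ z in 𝓝 c, g z = g c) := by
    intro h
    have h2 : ∀ᶠ z in 𝓝[s \ {c}] c, g z = g c := nhdsWithin_le_nhds h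
    have hNB : (𝓝[s \ {c}] c).NeBot := by
      rw [← hnwe]; infer_instance
    obtain ⟨z, hz1, hz2⟩ := (h2.and self_mem_nhdsWithin).exists
    rw [hgeq z hz2] at hz1
    have : g c = 0 := by simp [hg]
    rw [this, inv_eq_zero] at hz1
    exact hfne z hz2 hz1
  have hmap : 𝓝 (g c) ≤ Filter.map g (𝓝 c) :=
    hga.eventually_constant_or_nhds_le_map_nhds.resolve_left hne
  have hgc : g c = 0 := by simp [hg]
  have himg : g '' s ∈ 𝓝 (0 : ℂ) := by
    rw [← hgc]
    apply hmap
    rw [Filter.mem_map]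
    exact Filter.mem_of_superset (hs.mem_nhds hc) (Set.subset_preimage_image g s)
  obtain ⟨ε, hε, hball⟩ := Metric.mem_nhds_iff.mp himg
  refine ⟨ε⁻¹, fun w hw => ?_⟩
  have hεinv : (0:ℝ) < ε⁻¹ := by positivity
  have hw0 : w ≠ 0 := by
    intro h; rw [h] at hw; simp at hw; linarith
  have hwpos : 0 < ‖w‖ := lt_trans hεinv hw
  have hwin : w⁻¹ ∈ Metric.ball (0 : ℂ) ε := by
    rw [Metric.mem_ball, dist_zero_right, norm_inv]
    rw [inv_lt_comm₀ hwpos hε]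
    exact hw
  obtain ⟨z, hzs, hzg⟩ := hball hwin
  have hzc : z ≠ c := by
    intro h; rw [h, hgc] at hzg
    exact hw0 (by simpa using hzg.symm)
  have hzmem : z ∈ s \ {c} := ⟨hzs, hzc⟩
  refine ⟨z, hzmem, ?_⟩
  rw [hgeq z hzmem] at hzg
  have := congrArg (·⁻¹) hzg
  simpa [inv_inv] using this

/-- An injective holomorphic function on an open set minus two points cannot blow up
at both punctures: it has at most one pole. -/
theorem injective_holomorphic_at_most_one_pole
    (U : Set ℂ) (hU : IsOpen U) (a b : ℂ) (ha : a ∈ U) (hb : b ∈ U) (hab : a ≠ b)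
    (f : ℂ → ℂ) (hf : DifferentiableOn ℂ f (U \ {a, b}))
    (hinj : Set.InjOn f (U \ {a, b})) :
    ¬ (Filter.Tendsto (fun z => ‖f z‖) (𝓝[U \ {a, b}] a) Filter.atTop ∧
        Filter.Tendsto (fun z => ‖f z‖) (𝓝[U \ {a, b}] b) Filter.atTop) := by
  rintro ⟨hta, htb⟩
  have hd : 0 < dist a b := dist_pos.mpr hab
  -- construct a good radius at a point c ∈ {a, b}
  have key : ∀ c : ℂ, c ∈ U → (c = a ∨ c = b) →
      Filter.Tendsto (fun z => ‖f z‖) (𝓝[U \ {a, b}] c) Filter.atTop →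
      ∃ r : ℝ, 0 < r ∧ r ≤ dist a b / 2 ∧ Metric.ball c r \ {c} ⊆ U \ {a, b} ∧
        ∃ M : ℝ, ∀ w : ℂ, M < ‖w‖ → ∃ z ∈ Metric.ball c r \ {c}, f z = w := by
    intro c hcU hcab htc
    have hev : ∀ᶠ z in 𝓝[U \ {a, b}] c, 1 ≤ ‖f z‖ := htc.eventually_ge_atTop 1
    obtain ⟨ε, hε, hεh⟩ := Metric.mem_nhdsWithin_iff.mp hev
    obtain ⟨rU, hrU, hrUb⟩ := Metric.isOpen_iff.mp hU c hcU
    set r := min (min ε rU) (dist a b / 2) with hr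
    have hrpos : 0 < r := lt_min (lt_min hε hrU) (by linarith)
    have hsub : Metric.ball c r \ {c} ⊆ U \ {a, b} := by
      rintro z ⟨hz1, hz2⟩
      have hzU : z ∈ U := hrUb (Metric.ball_subset_ball (le_trans (min_le_left _ _) (min_le_right _ _)) hz1)
      have hzd : dist z c < dist a b / 2 := lt_of_lt_of_le (Metric.mem_ball.mp hz1) (min_le_right _ _)
      refine ⟨hzU, ?_⟩
      intro hzab
      rcases hcab with hca | hcb
      · rcases hzab with h | h
        · exact hz2 (by simp [h, hca])
        · simp only [Set.mem_singleton_iff] at h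
          rw [h, hca, dist_comm] at hzd
          linarith
      · rcases hzab with h | h
        · rw [h, hcb] at hzd
          linarith
        · simp only [Set.mem_singleton_iff] at h
          exact hz2 (by simp [h, hcb])
    refine ⟨r, hrpos, min_le_right _ _, hsub, ?_⟩
    have hball_sub : Metric.ball c r \ {c} ⊆ Metric.ball c ε := fun z hz =>
      Metric.ball_subset_ball (le_trans (min_le_left _ _) (min_le_left _ _)) hz.1
    exact surj_of_pole (Metric.ball c r) Metric.isOpen_ball c (Metric.mem_ball_self hrpos) f
      (hf.mono hsub)
      (fun z hz => hεh ⟨hball_sub hz, hsub hz⟩)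
      (htc.mono_left (nhdsWithin_mono c hsub))
  obtain ⟨ra, hra, hra2, hsa, Ma, hMa⟩ := key a ha (Or.inl rfl) hta
  obtain ⟨rb, hrb, hrb2, hsb, Mb, hMb⟩ := key b hb (Or.inr rfl) htb
  set w : ℂ := ((|max Ma Mb| + 1 : ℝ) : ℂ) with hw
  have habs : ‖w‖ = |max Ma Mb| + 1 := by
    rw [hw, Complex.norm_real, Real.norm_eq_abs]
    rw [abs_of_nonneg (by positivity)]
  have hwa : Ma < ‖w‖ := by
    rw [habs]
    have : Ma ≤ |max Ma Mb| := le_trans (le_max_left _ _) (le_abs_self _)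
    linarith
  have hwb : Mb < ‖w‖ := by
    rw [habs]
    have : Mb ≤ |max Ma Mb| := le_trans (le_max_right _ _) (le_abs_self _)
    linarith
  obtain ⟨za, hza, hfa⟩ := hMa w hwa
  obtain ⟨zb, hzb, hfb⟩ := hMb w hwb
  have heq : za = zb := hinj (hsa hza) (hsb hzb) (by rw [hfa, hfb])
  have h1 : dist za a < dist a b / 2 := lt_of_lt_of_le (Metric.mem_ball.mp hza.1) hra2
  have h2 : dist zb b < dist a b / 2 := lt_of_lt_of_le (Metric.mem_ball.mp hzb.1) hrb2
  rw [heq] at h1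
  have := dist_triangle a zb b
  rw [dist_comm a zb] at this
  linarith
end

section
/- Let S ⊆ ℂ be a finite set and let f : ℂ \ S → ℂ \ S be a holomorphic bijection of ℂ \ S onto itself. Then f is the restriction of a fractional linear transformation: there exist a, b, c, d ∈ ℂ with a·d − b·c ≠ 0 such that for every z ∈ ℂ \ S one has c·z + d ≠ 0 and f(z) = (a·z + b)/(c·z + d). -/
open Filter Topology

open Set Bornology Metric

lemma eventually_cobounded_iff {P : ℂ → Prop} :
    (∀ᶠ z in cobounded ℂ, P z) ↔ ∃ R : ℝ, ∀ z : ℂ, R ≤ ‖z‖ → P z := by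
  rw [← comap_norm_atTop, (atTop_basis.comap _).eventually_iff]
  simp [Set.subset_def]

lemma tendsto_cobounded_iff {α : Type*} {l : Filter α} {F : α → ℂ} :
    Tendsto F l (cobounded ℂ) ↔ ∀ M : ℝ, ∀ᶠ z in l, M ≤ ‖F z‖ := by
  rw [← tendsto_norm_atTop_iff_cobounded, Filter.tendsto_atTop]

lemma not_eventually_const {U T : Set ℂ} (hU : IsOpen U) (hT : T.Finite) {F : ℂ → ℂ}
    (hinj : Set.InjOn F (U \ T)) {z : ℂ} (hz : z ∈ U) :
    ¬ ∀ᶠ w in 𝓝 z, F w = F z := by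
  intro h
  obtain ⟨r, hr0, hball⟩ := Metric.mem_nhds_iff.1 (Filter.inter_mem (hU.mem_nhds hz) h)
  set A : Set ℂ := (fun t : ℝ => z + t) '' Set.Ioo 0 r with hA
  have hAsub : A ⊆ Metric.ball z r := by
    rintro - ⟨t, ht, rfl⟩
    simp only [Metric.mem_ball, dist_eq_norm, add_sub_cancel_left]
    rw [Complex.norm_real]
    exact abs_lt.2 ⟨by linarith [ht.1], ht.2⟩
  have hAinf : A.Infinite := by
    apply Set.Infinite.image ?_ (Set.Ioo_infinite hr0)
    intro a _ b _ hab
    exact_mod_cast add_left_cancel hab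
  obtain ⟨p, hp, q, hq, hpq⟩ := ((hAinf.diff hT).nontrivial)
  have hmem : ∀ x, x ∈ A \ T → x ∈ U \ T ∧ F x = F z := by
    rintro x ⟨hxA, hxT⟩
    obtain ⟨hxU, hxF⟩ := hball (hAsub hxA)
    exact ⟨⟨hxU, hxT⟩, hxF⟩
  obtain ⟨hpU, hpF⟩ := hmem p hp
  obtain ⟨hqU, hqF⟩ := hmem q hq
  exact hpq (hinj hpU hqU (hpF.trans hqF.symm))

lemma isOpen_image_of_nc {U V : Set ℂ} (hU : IsOpen U) {F : ℂ → ℂ}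
    (hF : DifferentiableOn ℂ F U)
    (hnc : ∀ z ∈ U, ¬ ∀ᶠ w in 𝓝 z, F w = F z)
    (hV : IsOpen V) (hVU : V ⊆ U) : IsOpen (F '' V) := by
  rw [isOpen_iff_mem_nhds]
  rintro - ⟨z, hzV, rfl⟩
  have han : AnalyticAt ℂ F z := hF.analyticAt (hU.mem_nhds (hVU hzV))
  rcases han.eventually_constant_or_nhds_le_map_nhds with h | h
  · exact absurd h (hnc z (hVU hzV))
  · exact h (image_mem_map (hV.mem_nhds hzV))

lemma deriv_ne_zero_of_injOn {U : Set ℂ} (hU : IsOpen U) {F : ℂ → ℂ}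
    (hF : DifferentiableOn ℂ F U) (hinj : Set.InjOn F U) {z₀ : ℂ} (hz₀ : z₀ ∈ U) :
    deriv F z₀ ≠ 0 := by
  have hnc : ∀ z ∈ U, ¬ ∀ᶠ w in 𝓝 z, F w = F z := fun z hz =>
    not_eventually_const hU Set.finite_empty (by simpa using hinj) hz
  intro h0
  -- deriv F is analytic at z₀
  obtain ⟨r₀, hr₀, hr₀U⟩ := Metric.isOpen_iff.1 hU z₀ hz₀
  have han : AnalyticOnNhd ℂ F (Metric.ball z₀ r₀) :=
    (hF.mono hr₀U).analyticOnNhd Metric.isOpen_ball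
  have hderan : AnalyticAt ℂ (deriv F) z₀ := han.deriv z₀ (Metric.mem_ball_self hr₀)
  rcases hderan.eventually_eq_zero_or_eventually_ne_zero with hzero | hne
  · -- deriv F ≡ 0 near z₀ : F locally constant, contradicting injectivity
    obtain ⟨r₁, hr₁0, hball⟩ := Metric.mem_nhds_iff.1
      (Filter.inter_mem (hU.mem_nhds hz₀) hzero)
    apply hnc z₀ hz₀
    filter_upwards [Metric.ball_mem_nhds z₀ hr₁0] with w hw
    refine (convex_ball z₀ r₁).is_const_of_fderivWithin_eq_zero
      (hF.mono (fun x hx => (hball hx).1)) ?_ hw (Metric.mem_ball_self hr₁0)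
    intro x hx
    rw [fderivWithin_of_isOpen Metric.isOpen_ball hx]
    ext v
    simp only [ContinuousLinearMap.zero_apply, fderiv_eq_smul_deriv]
    have : deriv F x = 0 := (hball hx).2
    simp [this]
  · -- deriv F ≠ 0 on a punctured neighborhood
    rw [eventually_nhdsWithin_iff] at hne
    obtain ⟨r, hr0, hball⟩ := Metric.mem_nhds_iff.1 (Filter.inter_mem (hU.mem_nhds hz₀) hne)
    set B := Metric.ball z₀ r with hB
    have hBU : B ⊆ U := fun x hx => (hball hx).1
    have hz₀B : z₀ ∈ B := Metric.mem_ball_self hr0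
    have hinjB : Set.InjOn F B := hinj.mono hBU
    set g := Function.invFunOn F B with hg
    have hgf : ∀ z ∈ B, g (F z) = z := fun z hz => hinjB.leftInvOn_invFunOn hz
    have himg : ∀ V : Set ℂ, IsOpen V → V ⊆ B → IsOpen (F '' V) := fun V hV hVB =>
      isOpen_image_of_nc hU hF hnc hV (hVB.trans hBU)
    have hFB_open : IsOpen (F '' B) := himg B Metric.isOpen_ball Subset.rfl
    have hfg : ∀ w ∈ F '' B, F (g w) = w := by
      rintro - ⟨z, hz, rfl⟩
      exact Function.invFunOn_eq ⟨z, hz, rfl⟩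
    have hcont : ∀ z ∈ B, ContinuousAt g (F z) := by
      intro z hz
      rw [ContinuousAt, hgf z hz]
      rw [_root_.tendsto_nhds]
      intro O hO hzO
      have hopen : IsOpen (F '' (O ∩ B)) := himg _ (hO.inter Metric.isOpen_ball) inter_subset_right
      filter_upwards [hopen.mem_nhds ⟨z, ⟨hzO, hz⟩, rfl⟩]
      rintro - ⟨u, hu, rfl⟩
      simp only [Set.mem_preimage]
      rw [hgf u hu.2]
      exact hu.1
    have hgdiff : DifferentiableOn ℂ g (F '' B) := by
      rw [← Complex.differentiableOn_compl_singleton_and_continuousAt_iff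
        (hFB_open.mem_nhds ⟨z₀, hz₀B, rfl⟩)]
      constructor
      · rintro w ⟨⟨z, hzB, rfl⟩, hwne⟩
        have hzne : z ≠ z₀ := fun h => hwne (by rw [h]; rfl)
        have hdz : deriv F z ≠ 0 := (hball hzB).2 hzne
        have hFz : HasDerivAt F (deriv F z) z :=
          (hF.differentiableAt (hU.mem_nhds (hBU hzB))).hasDerivAt
        have : HasDerivAt g (deriv F z)⁻¹ (F z) := by
          refine HasDerivAt.of_local_left_inverse (f := F) (hcont z hzB) ?_ hdz ?_
          · rw [hgf z hzB]; exact hFz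
          · filter_upwards [hFB_open.mem_nhds ⟨z, hzB, rfl⟩] with w hw
            exact hfg w hw
        exact this.differentiableAt.differentiableWithinAt
      · rw [show F z₀ = F z₀ from rfl]
        exact hcont z₀ hz₀B
    -- chain rule contradiction
    have hgF : DifferentiableAt ℂ g (F z₀) :=
      hgdiff.differentiableAt (hFB_open.mem_nhds ⟨z₀, hz₀B, rfl⟩)
    have hF0 : HasDerivAt F 0 z₀ := by
      have := (hF.differentiableAt (hU.mem_nhds hz₀)).hasDerivAt
      rwa [h0] at this
    have hcomp : HasDerivAt (g ∘ F) (deriv g (F z₀) * 0) z₀ :=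
      (hgF.hasDerivAt).comp z₀ hF0
    have heq : g ∘ F =ᶠ[𝓝 z₀] id := by
      filter_upwards [Metric.isOpen_ball.mem_nhds hz₀B] with w hw
      exact hgf w hw
    have hid : HasDerivAt id (deriv g (F z₀) * 0) z₀ := by
      refine hcomp.congr_of_eventuallyEq heq.symm
    have : (1 : ℂ) = deriv g (F z₀) * 0 := (hasDerivAt_id z₀).unique hid
    simp at this
lemma injOn_of_injOn_diff_finite {U T : Set ℂ} (hU : IsOpen U) (hT : T.Finite) {F : ℂ → ℂ}
    (hF : DifferentiableOn ℂ F U) (hinj : Set.InjOn F (U \ T)) : Set.InjOn F U := by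
  have hnc : ∀ z ∈ U, ¬ ∀ᶠ w in 𝓝 z, F w = F z := fun z hz =>
    not_eventually_const hU hT hinj hz
  intro x hx y hy hxy
  by_contra hne
  set r := dist x y / 2 with hr
  have hr0 : 0 < r := by
    have := dist_pos.2 hne
    positivity
  set Ux := Metric.ball x r ∩ U with hUx
  set Uy := Metric.ball y r ∩ U with hUy
  have hUxo : IsOpen Ux := Metric.isOpen_ball.inter hU
  have hUyo : IsOpen Uy := Metric.isOpen_ball.inter hU
  have hxUx : x ∈ Ux := ⟨Metric.mem_ball_self hr0, hx⟩
  have hyUy : y ∈ Uy := ⟨Metric.mem_ball_self hr0, hy⟩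
  have hTc : IsClosed T := hT.isClosed
  set A := F '' (Ux \ T) with hA
  set B := F '' (Uy \ T) with hB2
  have hAo : IsOpen A := isOpen_image_of_nc hU hF hnc (hUxo.sdiff hTc)
    ((Set.diff_subset).trans Set.inter_subset_right)
  have hBo : IsOpen B := isOpen_image_of_nc hU hF hnc (hUyo.sdiff hTc)
    ((Set.diff_subset).trans Set.inter_subset_right)
  -- F '' Ux and F '' Uy are neighborhoods of F x
  have hox : 𝓝 (F x) ≤ Filter.map F (𝓝 x) :=
    ((hF.analyticAt (hU.mem_nhds hx)).eventually_constant_or_nhds_le_map_nhds).resolve_left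
      (hnc x hx)
  have hoy : 𝓝 (F y) ≤ Filter.map F (𝓝 y) :=
    ((hF.analyticAt (hU.mem_nhds hy)).eventually_constant_or_nhds_le_map_nhds).resolve_left
      (hnc y hy)
  have hUxnb : F '' Ux ∈ 𝓝 (F x) := hox (Filter.image_mem_map (hUxo.mem_nhds hxUx))
  have hUynb : F '' Uy ∈ 𝓝 (F x) := by
    rw [hxy]
    exact hoy (Filter.image_mem_map (hUyo.mem_nhds hyUy))
  set E := F '' T with hE
  have hEfin : E.Finite := hT.image F
  have hsubA : F '' Ux ⊆ A ∪ E := by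
    rintro - ⟨u, hu, rfl⟩
    by_cases huT : u ∈ T
    · exact Or.inr ⟨u, huT, rfl⟩
    · exact Or.inl ⟨u, ⟨hu, huT⟩, rfl⟩
  have hsubB : F '' Uy ⊆ B ∪ E := by
    rintro - ⟨u, hu, rfl⟩
    by_cases huT : u ∈ T
    · exact Or.inr ⟨u, huT, rfl⟩
    · exact Or.inl ⟨u, ⟨hu, huT⟩, rfl⟩
  have hN : (A ∪ E) ∩ (B ∪ E) ∈ 𝓝 (F x) :=
    Filter.inter_mem (Filter.mem_of_superset hUxnb hsubA) (Filter.mem_of_superset hUynb hsubB)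
  have hE' : (E \ {F x})ᶜ ∈ 𝓝 (F x) := by
    refine (((hEfin.subset (Set.diff_subset)).isClosed).isOpen_compl).mem_nhds ?_
    simp
  obtain ⟨v, hvN, hvne⟩ := Filter.nonempty_of_mem
    (Filter.inter_mem (mem_nhdsWithin_of_mem_nhds (Filter.inter_mem hN hE'))
      self_mem_nhdsWithin (f := 𝓝[≠] (F x)) )
  have hvE : v ∉ E := fun hvE => hvN.2 ⟨hvE, hvne⟩
  have hvA : v ∈ A := (hvN.1.1).resolve_right hvE
  have hvB : v ∈ B := (hvN.1.2).resolve_right hvE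
  obtain ⟨a, haUx, hav⟩ := hvA
  obtain ⟨b, hbUy, hbv⟩ := hvB
  have hab : a ≠ b := by
    intro h
    have h1 : dist a x < r := Metric.mem_ball.1 haUx.1.1
    have h2 : dist b y < r := Metric.mem_ball.1 hbUy.1.1
    have : dist x y ≤ dist x a + dist a y := dist_triangle x a y
    rw [h] at h1
    have : dist x y < r + r := by
      calc dist x y ≤ dist x b + dist b y := dist_triangle x b y
        _ < r + r := by rw [dist_comm x b]; exact add_lt_add h1 h2
    rw [hr] at this
    linarith
  exact hab (hinj ⟨haUx.1.2, haUx.2⟩ ⟨hbUy.1.2, hbUy.2⟩ (hav.trans hbv.symm))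
lemma dichotomy_of_injOn_punctured {U : Set ℂ} (hU : IsOpen U) {s : ℂ} (hs : s ∈ U)
    {f : ℂ → ℂ} (hf : DifferentiableOn ℂ f (U \ {s})) (hinj : Set.InjOn f (U \ {s})) :
    (∃ L, Tendsto f (𝓝[≠] s) (𝓝 L)) ∨ Tendsto f (𝓝[≠] s) (cobounded ℂ) := by
  obtain ⟨r₁, hr₁, hr₁U⟩ := Metric.isOpen_iff.1 hU s hs
  set r₂ := r₁ / 2 with hr₂
  have hr₂0 : 0 < r₂ := by positivity
  have hU'o : IsOpen (U \ {s}) := hU.sdiff isClosed_singleton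
  have hnc : ∀ z ∈ U \ {s}, ¬ ∀ᶠ w in 𝓝 z, f w = f z := fun z hz =>
    not_eventually_const hU'o Set.finite_empty (by simpa using hinj) hz
  -- the annulus
  set An := Metric.ball s r₁ \ Metric.closedBall s r₂ with hAn
  have hAno : IsOpen An := Metric.isOpen_ball.sdiff Metric.isClosed_closedBall
  have hAnsub : An ⊆ U \ {s} := by
    rintro z ⟨hz1, hz2⟩
    refine ⟨hr₁U hz1, ?_⟩
    simp only [Set.mem_singleton_iff]
    intro h
    exact hz2 (by simp [h, Metric.mem_closedBall, le_of_lt hr₂0])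
  have hAnne : An.Nonempty := by
    refine ⟨s + (3 * r₁ / 4 : ℝ), ?_, ?_⟩
    · simp only [Metric.mem_ball, dist_eq_norm, add_sub_cancel_left, Complex.norm_real]
      rw [Real.norm_eq_abs, abs_of_pos (by positivity)]
      linarith
    · simp only [Metric.mem_closedBall, dist_eq_norm, add_sub_cancel_left, Complex.norm_real,
        not_le]
      rw [Real.norm_eq_abs, abs_of_pos (by positivity)]
      rw [hr₂]
      linarith
  set W := f '' An with hW
  have hWo : IsOpen W := isOpen_image_of_nc hU'o hf
    (fun z hz => hnc z hz) hAno hAnsub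
  obtain ⟨w, hw⟩ := hAnne.image f
  obtain ⟨ρ, hρ0, hρW⟩ := Metric.isOpen_iff.1 hWo w hw
  -- on the small punctured ball, f stays away from w
  set A := Metric.ball s r₂ \ {s} with hA
  have hAsub : A ⊆ U \ {s} := fun z hz =>
    ⟨hr₁U (Metric.ball_subset_ball (by linarith) hz.1), hz.2⟩
  have hfar : ∀ z ∈ A, ρ ≤ dist (f z) w := by
    intro z hz
    by_contra hlt
    push_neg at hlt
    have : f z ∈ W := hρW (Metric.mem_ball.2 hlt)
    obtain ⟨u, huAn, huf⟩ := this
    have : u = z := hinj (hAnsub huAn) (hAsub hz) huf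
    rw [this] at huAn
    exact huAn.2 (Metric.ball_subset_closedBall hz.1)
  set h : ℂ → ℂ := fun z => (f z - w)⁻¹ with hh
  have hfne : ∀ z ∈ A, f z - w ≠ 0 := by
    intro z hz
    rw [sub_ne_zero]
    intro he
    have := hfar z hz
    rw [he] at this
    simp at this
    linarith
  have hhd : DifferentiableOn ℂ h A := by
    have : DifferentiableOn ℂ f A := hf.mono hAsub
    exact ((this.sub_const w).inv (fun z hz => hfne z hz))
  have hAeq : A = Metric.ball s r₂ \ {s} := rfl
  have hhb : BddAbove (norm ∘ h '' (Metric.ball s r₂ \ {s})) := by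
    refine ⟨ρ⁻¹, ?_⟩
    rintro - ⟨z, hz, rfl⟩
    simp only [Function.comp_apply, hh, norm_inv]
    rw [← dist_eq_norm]
    exact inv_anti₀ hρ0 (hfar z hz)
  have hball_nhds : Metric.ball s r₂ ∈ 𝓝 s := Metric.ball_mem_nhds s hr₂0
  have hHd : DifferentiableOn ℂ (Function.update h s (limUnder (𝓝[≠] s) h))
      (Metric.ball s r₂) :=
    Complex.differentiableOn_update_limUnder_of_bddAbove hball_nhds
      hhd hhb
  set L₀ := limUnder (𝓝[≠] s) h with hL₀
  have hHcont : ContinuousAt (Function.update h s L₀) s :=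
    (hHd.differentiableAt hball_nhds).continuousAt
  have hA_mem : A ∈ 𝓝[≠] s := by
    rw [mem_nhdsWithin]
    exact ⟨Metric.ball s r₂, Metric.isOpen_ball, Metric.mem_ball_self hr₂0,
      fun z hz => ⟨hz.1, hz.2⟩⟩
  have hhL₀ : Tendsto h (𝓝[≠] s) (𝓝 L₀) := by
    have h1 : Tendsto (Function.update h s L₀) (𝓝[≠] s) (𝓝 L₀) := by
      have := hHcont.tendsto
      rw [Function.update_self] at this
      exact this.mono_left nhdsWithin_le_nhds
    refine h1.congr' ?_
    filter_upwards [self_mem_nhdsWithin] with z hz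
    rw [Function.update_of_ne hz]
  by_cases hL0 : L₀ = 0
  · right
    rw [tendsto_cobounded_iff]
    intro M
    -- ‖f z - w‖ = ‖h z‖⁻¹ → ∞
    have hinv : Tendsto (fun z => ‖h z‖⁻¹) (𝓝[≠] s) atTop := by
      refine Filter.Tendsto.inv_tendsto_nhdsGT_zero ?_
      rw [tendsto_nhdsWithin_iff]
      constructor
      · rw [hL0] at hhL₀
        simpa using hhL₀.norm
      · filter_upwards [hA_mem] with z hz
        simp only [Set.mem_Ioi, norm_pos_iff, hh]
        exact inv_ne_zero (hfne z hz)
    have hev : ∀ᶠ z in 𝓝[≠] s, M + ‖w‖ ≤ ‖h z‖⁻¹ := hinv.eventually_ge_atTop (M + ‖w‖)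
    filter_upwards [hev, hA_mem] with z hz hzA
    have h1 : ‖h z‖⁻¹ = ‖f z - w‖ := by
      simp [hh, norm_inv]
    rw [h1] at hz
    have : ‖f z - w‖ ≤ ‖f z‖ + ‖w‖ := norm_sub_le _ _
    linarith
  · left
    refine ⟨w + L₀⁻¹, ?_⟩
    have h1 : Tendsto (fun z => w + (h z)⁻¹) (𝓝[≠] s) (𝓝 (w + L₀⁻¹)) :=
      tendsto_const_nhds.add (hhL₀.inv₀ hL0)
    refine h1.congr' ?_
    filter_upwards [hA_mem] with z hz
    simp [hh, inv_inv, sub_eq_iff_eq_add']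

lemma pole_surj {U : Set ℂ} (hU : IsOpen U) {p : ℂ} (hp : p ∈ U) {F : ℂ → ℂ}
    (hF : DifferentiableOn ℂ F (U \ {p})) (ht : Tendsto F (𝓝[≠] p) (cobounded ℂ)) :
    ∃ M : ℝ, ∀ v : ℂ, M < ‖v‖ → v ∈ F '' (U \ {p}) := by
  have hev : ∀ᶠ z in 𝓝[≠] p, 1 ≤ ‖F z‖ :=
    (tendsto_cobounded_iff.1 ht) 1
  have hUev : ∀ᶠ z in 𝓝[≠] p, z ∈ U := mem_nhdsWithin_of_mem_nhds (hU.mem_nhds hp)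
  obtain ⟨δ, hδ0, hδ⟩ := Metric.mem_nhdsWithin_iff.1 (Filter.inter_mem hev hUev)
  set b := Metric.ball p δ ∩ U with hb
  have hbo : IsOpen b := Metric.isOpen_ball.inter hU
  have hbnhds : b ∈ 𝓝 p := hbo.mem_nhds ⟨Metric.mem_ball_self hδ0, hp⟩
  have hkey : ∀ z ∈ b \ {p}, 1 ≤ ‖F z‖ ∧ z ∈ U := by
    rintro z ⟨⟨hz1, hz2⟩, hz3⟩
    exact hδ ⟨hz1, hz3⟩
  have hFne : ∀ z ∈ b \ {p}, F z ≠ 0 := by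
    intro z hz
    have := (hkey z hz).1
    intro h
    rw [h] at this
    simp at this
    linarith
  set u : ℂ → ℂ := fun z => (F z)⁻¹ with hu
  have hud : DifferentiableOn ℂ u (b \ {p}) := by
    refine DifferentiableOn.inv ?_ hFne
    exact hF.mono (fun z hz => ⟨hz.1.2, hz.2⟩)
  have hub : BddAbove (norm ∘ u '' (b \ {p})) := by
    refine ⟨1, ?_⟩
    rintro - ⟨z, hz, rfl⟩
    simp only [Function.comp_apply, hu, norm_inv]
    exact inv_le_one_of_one_le₀ (hkey z hz).1
  have htu : Tendsto u (𝓝[≠] p) (𝓝 0) := by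
    have h1 : Tendsto (fun z => (F z)⁻¹) (𝓝[≠] p) (𝓝 0) :=
      tendsto_inv₀_cobounded.comp ht
    exact h1
  have hud2 : DifferentiableOn ℂ (Function.update u p (limUnder (𝓝[≠] p) u)) b :=
    Complex.differentiableOn_update_limUnder_of_bddAbove hbnhds hud hub
  have hlim : limUnder (𝓝[≠] p) u = 0 := htu.limUnder_eq
  rw [hlim] at hud2
  set v0 : ℂ → ℂ := Function.update u p 0 with hv0
  have hv0p : v0 p = 0 := Function.update_self p 0 u
  have hnc : ¬ ∀ᶠ w in 𝓝 p, v0 w = v0 p := by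
    intro h
    rw [hv0p] at h
    obtain ⟨z, hz1, hz2⟩ := Filter.nonempty_of_mem
      (Filter.inter_mem (mem_nhdsWithin_of_mem_nhds (Filter.inter_mem h hbnhds))
        self_mem_nhdsWithin (f := 𝓝[≠] p))
    have hzb : z ∈ b \ {p} := ⟨hz1.2, hz2⟩
    have heq : v0 z = u z := Function.update_of_ne hz2 0 u
    have hz0 : v0 z = 0 := hz1.1
    rw [heq] at hz0
    exact hFne z hzb (by simpa [hu, inv_eq_zero] using hz0)
  have hopen : 𝓝 (v0 p) ≤ Filter.map v0 (𝓝 p) :=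
    ((hud2.analyticAt hbnhds).eventually_constant_or_nhds_le_map_nhds).resolve_left hnc
  rw [hv0p] at hopen
  have himg : v0 '' b ∈ 𝓝 (0 : ℂ) := hopen (Filter.image_mem_map hbnhds)
  obtain ⟨ε, hε0, hεsub⟩ := Metric.mem_nhds_iff.1 himg
  refine ⟨ε⁻¹, ?_⟩
  intro v hv
  have hv0' : v ≠ 0 := by
    intro h
    rw [h] at hv
    simp at hv
    exact absurd hv (not_lt.2 hε0.le)
  have hvinv : ‖v⁻¹‖ < ε := by
    rw [norm_inv]
    have h1 : 0 < ‖v‖ := lt_trans (by positivity) hv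
    exact (inv_lt_comm₀ hε0 h1).1 hv
  have : v⁻¹ ∈ v0 '' b := hεsub (by simpa [Metric.mem_ball, dist_eq_norm] using hvinv)
  obtain ⟨z, hzb, hzv⟩ := this
  have hzp : z ≠ p := by
    intro h
    rw [h, hv0p] at hzv
    exact hv0' (by simpa using congrArg Inv.inv hzv.symm)
  have hzmem : z ∈ b \ {p} := ⟨hzb, hzp⟩
  have huz : u z = v⁻¹ := by rw [← hzv, hv0]; exact (Function.update_of_ne hzp 0 u).symm
  refine ⟨z, ⟨(hkey z hzmem).2, hzp⟩, ?_⟩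
  have : (F z)⁻¹ = v⁻¹ := huz
  calc F z = ((F z)⁻¹)⁻¹ := (inv_inv _).symm
    _ = (v⁻¹)⁻¹ := by rw [this]
    _ = v := inv_inv v
lemma entire_injective_cobounded_affine {F : ℂ → ℂ} (hF : Differentiable ℂ F)
    (hinj : Function.Injective F) (ht : Tendsto F (cobounded ℂ) (cobounded ℂ)) :
    ∃ a b : ℂ, a ≠ 0 ∧ ∀ z, F z = a * z + b := by
  have ha : deriv F 0 ≠ 0 :=
    deriv_ne_zero_of_injOn isOpen_univ hF.differentiableOn (hinj.injOn) (Set.mem_univ 0)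
  set a := deriv F 0 with haa
  -- growth control at infinity
  obtain ⟨R₀, hR₀⟩ := eventually_cobounded_iff.1 ((tendsto_cobounded_iff.1 ht) 1)
  set R₁ := max R₀ 1 with hR₁
  have hR₁1 : (1:ℝ) ≤ R₁ := le_max_right _ _
  have hR₁0 : (0:ℝ) < R₁ := lt_of_lt_of_le one_pos hR₁1
  set δ := R₁⁻¹ with hδ
  have hδ0 : (0:ℝ) < δ := by positivity
  set b := Metric.ball (0:ℂ) δ with hbdef
  have hbig : ∀ w : ℂ, w ∈ b \ {0} → R₁ ≤ ‖w⁻¹‖ ∧ F w⁻¹ ≠ 0 := by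
    rintro w ⟨hw1, hw2⟩
    have hw0 : w ≠ 0 := hw2
    have hnw : 0 < ‖w‖ := norm_pos_iff.2 hw0
    have h1 : ‖w‖ < δ := by rw [hbdef, mem_ball_zero_iff] at hw1; exact hw1
    have h2 : R₁ ≤ ‖w⁻¹‖ := by
      rw [norm_inv]
      rw [hδ] at h1
      exact le_of_lt ((lt_inv_comm₀ hnw hR₁0).1 h1)
    have h3 : 1 ≤ ‖F w⁻¹‖ := hR₀ _ (le_trans (le_max_left _ _) h2)
    refine ⟨h2, fun h => by rw [h] at h3; simp at h3; linarith⟩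
  set u₀ : ℂ → ℂ := fun w => (F w⁻¹)⁻¹ with hu₀
  have hu₀d : DifferentiableOn ℂ u₀ (b \ {0}) := by
    intro w hw
    have hw0 : w ≠ 0 := hw.2
    refine DifferentiableAt.differentiableWithinAt ?_
    exact ((hF.differentiableAt.comp w (differentiableAt_inv hw0)).inv (hbig w hw).2)
  have hu₀b : BddAbove (norm ∘ u₀ '' (b \ {0})) := by
    refine ⟨1, ?_⟩
    rintro - ⟨w, hw, rfl⟩
    simp only [Function.comp_apply, hu₀, norm_inv]
    exact inv_le_one_of_one_le₀ (hR₀ _ (le_trans (le_max_left _ _) (hbig w hw).1))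
  have htu₀ : Tendsto u₀ (𝓝[≠] (0:ℂ)) (𝓝 0) := by
    have h1 : Tendsto (fun w : ℂ => w⁻¹) (𝓝[≠] (0:ℂ)) (cobounded ℂ) :=
      tendsto_inv₀_nhdsNE_zero
    exact tendsto_inv₀_cobounded.comp (ht.comp h1)
  have hbnhds : b ∈ 𝓝 (0:ℂ) := Metric.ball_mem_nhds 0 hδ0
  have hutd : DifferentiableOn ℂ (Function.update u₀ 0 (limUnder (𝓝[≠] (0:ℂ)) u₀)) b :=
    Complex.differentiableOn_update_limUnder_of_bddAbove hbnhds hu₀d hu₀b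
  rw [htu₀.limUnder_eq] at hutd
  set ut : ℂ → ℂ := Function.update u₀ 0 0 with hut
  have hut0 : ut 0 = 0 := Function.update_self 0 0 u₀
  have hutne : ∀ w ∈ b \ {0}, ut w ≠ 0 := by
    intro w hw
    rw [hut, Function.update_of_ne hw.2]
    exact inv_ne_zero (hbig w hw).2
  have hutinj : Set.InjOn ut b := by
    intro w₁ hw₁ w₂ hw₂ he
    by_cases h₁ : w₁ = 0
    · by_cases h₂ : w₂ = 0
      · rw [h₁, h₂]
      · rw [h₁, hut0] at he
        exact absurd he.symm (hutne w₂ ⟨hw₂, h₂⟩)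
    · by_cases h₂ : w₂ = 0
      · rw [h₂, hut0] at he
        exact absurd he (hutne w₁ ⟨hw₁, h₁⟩)
      · rw [hut, Function.update_of_ne h₁, Function.update_of_ne h₂] at he
        have := inv_injective he
        have := hinj this
        exact inv_injective this
  have hc : deriv ut 0 ≠ 0 :=
    deriv_ne_zero_of_injOn Metric.isOpen_ball hutd hutinj (Metric.mem_ball_self hδ0)
  set c := deriv ut 0 with hcc
  -- get eventual lower bound ‖ut w‖ ≥ (‖c‖/2)‖w‖
  have hslope : Tendsto (slope ut 0) (𝓝[≠] (0:ℂ)) (𝓝 c) := by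
    rw [← hasDerivAt_iff_tendsto_slope]
    exact (hutd.differentiableAt hbnhds).hasDerivAt
  have hcpos : 0 < ‖c‖ := norm_pos_iff.2 hc
  have hev : ∀ᶠ w in 𝓝[≠] (0:ℂ), ‖c‖/2 < ‖slope ut 0 w‖ :=
    hslope.norm.eventually (lt_mem_nhds (by linarith))
  have hbmem : b \ {0} ∈ 𝓝[≠] (0:ℂ) := by
    rw [mem_nhdsWithin]
    exact ⟨b, Metric.isOpen_ball, Metric.mem_ball_self hδ0, fun z hz => ⟨hz.1, hz.2⟩⟩
  obtain ⟨δ₂, hδ₂0, hδ₂⟩ := Metric.mem_nhdsWithin_iff.1 (Filter.inter_mem hev hbmem)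
  -- growth : for ‖z‖ large, ‖F z‖ ≤ (2/‖c‖) ‖z‖
  have hgrowth : ∀ z : ℂ, max δ₂⁻¹ R₁ < ‖z‖ → ‖F z‖ ≤ 2/‖c‖ * ‖z‖ := by
    intro z hz
    have hz0 : z ≠ 0 := by
      intro h
      rw [h] at hz
      simp at hz
      have : (0:ℝ) < δ₂⁻¹ := by positivity
      linarith [hz.1]
    have hnz : 0 < ‖z‖ := norm_pos_iff.2 hz0
    set w := z⁻¹ with hwdef
    have hw0 : w ≠ 0 := inv_ne_zero hz0
    have hwn : ‖w‖ = ‖z‖⁻¹ := norm_inv z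
    have hwδ₂ : ‖w‖ < δ₂ := by
      rw [hwn]
      have h1 : δ₂⁻¹ < ‖z‖ := lt_of_le_of_lt (le_max_left _ _) hz
      exact (inv_lt_comm₀ hδ₂0 hnz).1 h1
    have hwmem : w ∈ Metric.ball (0:ℂ) δ₂ ∩ {(0:ℂ)}ᶜ := by
      constructor
      · simpa [Metric.mem_ball, dist_eq_norm] using hwδ₂
      · exact hw0
    obtain ⟨hs, hb'⟩ := hδ₂ hwmem
    have hwb : w ∈ b \ {0} := hb'
    have hutw : ut w = (F z)⁻¹ := by
      rw [hut, Function.update_of_ne hw0]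
      simp [hu₀, hwdef, inv_inv]
    have hsl : slope ut 0 w = w⁻¹ * ut w := by
      rw [slope_def_field, hut0, sub_zero, sub_zero, div_eq_inv_mul]
    have hFz0 : F z ≠ 0 := by
      have := (hbig w hwb).2
      rwa [hwdef, inv_inv] at this
    have hnorm : ‖c‖/2 < ‖w⁻¹ * ut w‖ := by
      rw [← hsl]
      exact hs
    rw [hutw] at hnorm
    simp only [norm_mul, norm_inv, hwn, inv_inv] at hnorm
    -- hnorm : ‖c‖/2 < ‖z‖ * ‖F z‖⁻¹
    have hFn : 0 < ‖F z‖ := norm_pos_iff.2 hFz0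
    have hdiv : ‖c‖/2 < ‖z‖ / ‖F z‖ := by rw [div_eq_mul_inv]; exact hnorm
    have hlt : ‖c‖/2 * ‖F z‖ < ‖z‖ := (lt_div_iff₀ hFn).1 hdiv
    have hcne : (‖c‖ * 2 : ℝ) ≠ 0 := by positivity
    have h2 : ‖F z‖ = 2/‖c‖ * (‖c‖/2 * ‖F z‖) := by
      rw [← mul_assoc, div_mul_div_comm, mul_comm (2:ℝ) ‖c‖, div_self hcne, one_mul]
    rw [h2]
    exact mul_le_mul_of_nonneg_left hlt.le (by positivity)
  -- the slope function K is entire and bounded, hence constant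
  set K : ℂ → ℂ := Function.update (slope F 0) 0 a with hK
  have hK0 : K 0 = a := Function.update_self 0 a (slope F 0)
  have hKslope : ∀ z : ℂ, z ≠ 0 → K z = (F z - F 0) / z := by
    intro z hz
    rw [hK, Function.update_of_ne hz, slope_def_field]
    simp
  have hKtend : Tendsto (slope F 0) (𝓝[≠] (0:ℂ)) (𝓝 a) := by
    rw [← hasDerivAt_iff_tendsto_slope]
    exact hF.differentiableAt.hasDerivAt
  have hKd : Differentiable ℂ K := by
    rw [← differentiableOn_univ]
    rw [← Complex.differentiableOn_compl_singleton_and_continuousAt_iff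
      (Filter.univ_mem : (Set.univ : Set ℂ) ∈ 𝓝 0)]
    constructor
    · intro z hz
      have hz0 : z ≠ 0 := hz.2
      have hd : DifferentiableAt ℂ (fun z : ℂ => (F z - F 0) / z) z :=
        ((hF.differentiableAt.sub_const (F 0)).div differentiableAt_id hz0)
      refine (hd.congr_of_eventuallyEq ?_).differentiableWithinAt
      filter_upwards [isOpen_ne.mem_nhds hz0] with x hx
      exact hKslope x hx
    · rw [ContinuousAt, hK0, ← nhdsNE_sup_pure]
      refine Filter.Tendsto.sup ?_ ?_
      · refine hKtend.congr' ?_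
        filter_upwards [self_mem_nhdsWithin] with z hz
        rw [hK, Function.update_of_ne hz]
      · have := tendsto_pure_nhds K 0
        rwa [hK0] at this
  have hKbdd : Bornology.IsBounded (Set.range K) := by
    set Rb := max δ₂⁻¹ R₁ + 1 with hRb
    have hRb0 : 0 < Rb := by
      have : (0:ℝ) < δ₂⁻¹ := by positivity
      have h1 : (0:ℝ) < max δ₂⁻¹ R₁ := lt_of_lt_of_le this (le_max_left _ _)
      rw [hRb]
      linarith
    obtain ⟨C₂, hC₂⟩ := (isCompact_closedBall (0:ℂ) Rb).exists_bound_of_continuousOn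
      hKd.continuous.continuousOn
    refine isBounded_iff_forall_norm_le.2 ⟨max C₂ (2/‖c‖ + ‖F 0‖), ?_⟩
    rintro - ⟨z, rfl⟩
    by_cases hz : ‖z‖ ≤ Rb
    · exact le_trans (hC₂ z (by simpa [Metric.mem_closedBall, dist_eq_norm] using hz))
        (le_max_left _ _)
    · push_neg at hz
      have hzbig : max δ₂⁻¹ R₁ < ‖z‖ := by rw [hRb] at hz; linarith
      have hz0 : z ≠ 0 := by
        intro h
        rw [h] at hz
        simp at hz
        linarith
      have hnz : 0 < ‖z‖ := norm_pos_iff.2 hz0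
      have h1 : ‖K z‖ = ‖F z - F 0‖ / ‖z‖ := by
        rw [hKslope z hz0, norm_div]
      have h2 : ‖F z - F 0‖ ≤ 2/‖c‖ * ‖z‖ + ‖F 0‖ := by
        calc ‖F z - F 0‖ ≤ ‖F z‖ + ‖F 0‖ := norm_sub_le _ _
          _ ≤ 2/‖c‖ * ‖z‖ + ‖F 0‖ := by linarith [hgrowth z hzbig]
      have h3 : ‖K z‖ ≤ 2/‖c‖ + ‖F 0‖ := by
        rw [h1, div_le_iff₀ hnz]
        have hz1 : (1:ℝ) ≤ ‖z‖ := by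
          have : R₁ ≤ max δ₂⁻¹ R₁ := le_max_right _ _
          linarith
        calc ‖F z - F 0‖ ≤ 2/‖c‖ * ‖z‖ + ‖F 0‖ := h2
          _ ≤ 2/‖c‖ * ‖z‖ + ‖F 0‖ * ‖z‖ := by
              have : ‖F 0‖ ≤ ‖F 0‖ * ‖z‖ := le_mul_of_one_le_right (norm_nonneg _) hz1
              linarith
          _ = (2/‖c‖ + ‖F 0‖) * ‖z‖ := by ring
      exact le_trans h3 (le_max_right _ _)
  -- Liouville
  have hconst : ∀ z : ℂ, K z = K 0 := fun z => hKd.apply_eq_apply_of_bounded hKbdd z 0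
  refine ⟨a, F 0, ha, ?_⟩
  intro z
  by_cases hz : z = 0
  · rw [hz]; ring
  · have h1 : K z = a := by rw [hconst z, hK0]
    rw [hKslope z hz] at h1
    field_simp at h1
    linear_combination h1

/-- A holomorphic bijection of `ℂ \ S` onto itself, for `S` finite, is the restriction
of a fractional linear (Möbius) transformation. -/
theorem holomorphic_bijection_compl_finite_is_mobius
    (S : Set ℂ) (hS : S.Finite) (f : ℂ → ℂ)
    (hf : DifferentiableOn ℂ f Sᶜ) (hbij : Set.BijOn f Sᶜ Sᶜ) :
    ∃ a b c d : ℂ, a * d - b * c ≠ 0 ∧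
      ∀ z ∈ Sᶜ, c * z + d ≠ 0 ∧ f z = (a * z + b) / (c * z + d) := by
  classical
  have hSc : IsClosed S := hS.isClosed
  have hSo : IsOpen Sᶜ := hSc.isOpen_compl
  have hinj : Set.InjOn f Sᶜ := hbij.injOn
  -- choice of punctured balls avoiding S
  have hball : ∀ s ∈ S, ∃ ε > 0, Metric.ball s ε \ {s} ⊆ Sᶜ := by
    intro s hs
    have hcl : IsClosed (S \ {s}) := (hS.subset Set.diff_subset).isClosed
    have hsmem : s ∈ (S \ {s})ᶜ := by simp
    obtain ⟨ε, hε0, hεsub⟩ := Metric.isOpen_iff.1 hcl.isOpen_compl s hsmem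
    refine ⟨ε, hε0, ?_⟩
    rintro z ⟨hz1, hz2⟩ hzS
    exact (hεsub hz1) ⟨hzS, hz2⟩
  choose! ε hε0 hεS using hball
  have hpball : ∀ s ∈ S, Metric.ball s (ε s) \ {s} ∈ 𝓝[≠] s := by
    intro s hs
    rw [mem_nhdsWithin]
    exact ⟨_, Metric.isOpen_ball, Metric.mem_ball_self (hε0 s hs),
      fun z hz => ⟨hz.1, hz.2⟩⟩
  have hdich : ∀ s ∈ S,
      (∃ L, Tendsto f (𝓝[≠] s) (𝓝 L)) ∨ Tendsto f (𝓝[≠] s) (cobounded ℂ) := by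
    intro s hs
    exact dichotomy_of_injOn_punctured Metric.isOpen_ball (Metric.mem_ball_self (hε0 s hs))
      (hf.mono (fun z hz => hεS s hs ⟨hz.1, hz.2⟩))
      (hinj.mono (fun z hz => hεS s hs ⟨hz.1, hz.2⟩))
  set P := {z | z ∈ S ∧ Tendsto f (𝓝[≠] z) (cobounded ℂ)} with hP
  have hPS : P ⊆ S := fun z hz => hz.1
  have hPfin : P.Finite := hS.subset hPS
  have hPo : IsOpen Pᶜ := hPfin.isClosed.isOpen_compl
  set F := fun z => if z ∈ S \ P then limUnder (𝓝[≠] z) f else f z with hFdef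
  have hFf : ∀ z ∈ Sᶜ, F z = f z := by
    intro z hz
    rw [hFdef]
    simp only
    rw [if_neg]
    intro h
    exact hz h.1
  have hFf' : ∀ s ∈ S, F =ᶠ[𝓝[≠] s] f := by
    intro s hs
    filter_upwards [hpball s hs] with z hz
    exact hFf z (hεS s hs hz)
  have hScPc : Sᶜ ⊆ Pᶜ := fun z hz hzP => hz (hPS hzP)
  have hFdiff : DifferentiableOn ℂ F Pᶜ := by
    intro z hz
    by_cases hzS : z ∈ S
    · have hzP : z ∉ P := hz
      have hzSP : z ∈ S \ P := ⟨hzS, hzP⟩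
      obtain ⟨L, hL⟩ := (hdich z hzS).resolve_right (fun h => hzP ⟨hzS, h⟩)
      have hev : ∀ᶠ w in 𝓝[≠] z, ‖f w‖ < ‖L‖ + 1 ∧ w ∈ Sᶜ := by
        have h1 : ∀ᶠ w in 𝓝[≠] z, ‖f w‖ < ‖L‖ + 1 :=
          hL.norm.eventually (gt_mem_nhds (by linarith [norm_nonneg L] : ‖L‖ < ‖L‖ + 1))
        have h2 : ∀ᶠ w in 𝓝[≠] z, w ∈ Sᶜ := by
          filter_upwards [hpball z hzS] with w hw
          exact hεS z hzS hw
        exact h1.and h2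
      obtain ⟨δ, hδ0, hδ⟩ := Metric.mem_nhdsWithin_iff.1 hev
      have hbnhds : Metric.ball z δ ∈ 𝓝 z := Metric.ball_mem_nhds z hδ0
      have hdOn : DifferentiableOn ℂ f (Metric.ball z δ \ {z}) :=
        hf.mono (fun w hw => (hδ ⟨hw.1, hw.2⟩).2)
      have hbdd : BddAbove (norm ∘ f '' (Metric.ball z δ \ {z})) := by
        refine ⟨‖L‖ + 1, ?_⟩
        rintro - ⟨w, hw, rfl⟩
        exact le_of_lt (hδ ⟨hw.1, hw.2⟩).1
      have hupd := Complex.differentiableOn_update_limUnder_of_bddAbove hbnhds hdOn hbdd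
      have hda : DifferentiableAt ℂ (Function.update f z (limUnder (𝓝[≠] z) f)) z :=
        hupd.differentiableAt hbnhds
      refine (hda.congr_of_eventuallyEq ?_).differentiableWithinAt
      filter_upwards [hbnhds] with w hw
      by_cases hwz : w = z
      · rw [hwz, Function.update_self, hFdef]
        simp only
        rw [if_pos hzSP]
      · rw [Function.update_of_ne hwz]
        exact hFf w (hδ ⟨hw, hwz⟩).2
    · have heq : F =ᶠ[𝓝 z] f := by
        filter_upwards [hSo.mem_nhds hzS] with w hw
        exact hFf w hw
      exact ((hf.differentiableAt (hSo.mem_nhds hzS)).congr_of_eventuallyEq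
        heq).differentiableWithinAt
  have hSPeq : Pᶜ \ (S \ P) = Sᶜ := by
    ext w
    simp only [Set.mem_diff, Set.mem_compl_iff]
    constructor
    · rintro ⟨hwP, hwSP⟩ hwS
      exact hwSP ⟨hwS, hwP⟩
    · intro hwS
      exact ⟨fun hwP => hwS (hPS hwP), fun h => hwS h.1⟩
  have hFinjS : Set.InjOn F Sᶜ := fun x hx y hy h =>
    hinj hx hy (by rwa [hFf x hx, hFf y hy] at h)
  have hFinj : Set.InjOn F Pᶜ :=
    injOn_of_injOn_diff_finite hPo (hS.subset Set.diff_subset) hFdiff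
      (by rw [hSPeq]; exact hFinjS)
  have hFpole : ∀ p ∈ P, Tendsto F (𝓝[≠] p) (cobounded ℂ) := fun p hp =>
    Filter.Tendsto.congr' (hFf' p (hPS hp)).symm hp.2
  -- radius enclosing S
  obtain ⟨C, hC⟩ := isBounded_iff_forall_norm_le.1 hS.isBounded
  set R₀ := max C 0 + 1 with hR₀def
  have hR₀0 : (0:ℝ) < R₀ := by
    have : (0:ℝ) ≤ max C 0 := le_max_right _ _
    rw [hR₀def]; linarith
  have hSR₀ : ∀ z ∈ S, ‖z‖ < R₀ := by
    intro z hz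
    have h1 := hC z hz
    have h2 : C ≤ max C 0 := le_max_left _ _
    rw [hR₀def]; linarith
  have hout : ∀ z : ℂ, R₀ ≤ ‖z‖ → z ∈ Sᶜ := by
    intro z hz hzS
    exact absurd hz (not_le.2 (hSR₀ z hzS))
  set U₀ := Metric.ball (0:ℂ) R₀⁻¹ with hU₀def
  set g : ℂ → ℂ := fun w => F w⁻¹ with hgdef
  have hU₀inv : ∀ w : ℂ, w ∈ U₀ \ {0} → w⁻¹ ∈ Sᶜ ∧ R₀ < ‖w⁻¹‖ := by
    rintro w ⟨hw1, hw2⟩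
    have hw0 : w ≠ 0 := hw2
    have hnw : 0 < ‖w‖ := norm_pos_iff.2 hw0
    have h1 : ‖w‖ < R₀⁻¹ := by rwa [hU₀def, mem_ball_zero_iff] at hw1
    have h2 : R₀ < ‖w⁻¹‖ := by
      rw [norm_inv]
      exact (lt_inv_comm₀ hnw hR₀0).1 h1
    exact ⟨hout _ (le_of_lt h2), h2⟩
  have hgd : DifferentiableOn ℂ g (U₀ \ {0}) := by
    intro w hw
    have hw0 : w ≠ 0 := hw.2
    have h1 : DifferentiableAt ℂ F w⁻¹ :=
      hFdiff.differentiableAt (hPo.mem_nhds (hScPc (hU₀inv w hw).1))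
    exact (h1.comp w (differentiableAt_inv hw0)).differentiableWithinAt
  have hginj : Set.InjOn g (U₀ \ {0}) := by
    intro w₁ hw₁ w₂ hw₂ he
    have h1 := hFinj (hScPc (hU₀inv w₁ hw₁).1) (hScPc (hU₀inv w₂ hw₂).1) he
    exact inv_injective h1
  have hU₀0 : (0:ℂ) ∈ U₀ := Metric.mem_ball_self (by positivity)
  -- helper facts about translation/inversion at the poles
  have hevne : ∀ᶠ w : ℂ in cobounded ℂ, w ≠ 0 := by
    rw [eventually_cobounded_iff]
    refine ⟨1, fun w hw h => ?_⟩
    rw [h] at hw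
    simp at hw
    linarith
  rcases dichotomy_of_injOn_punctured Metric.isOpen_ball hU₀0 hgd hginj with ⟨L, hgL⟩ | hgpole
  · -- removable singularity at infinity
    have hFtendL : Tendsto F (cobounded ℂ) (𝓝 L) := by
      have h1 : Tendsto (fun z : ℂ => z⁻¹) (cobounded ℂ) (𝓝[≠] (0:ℂ)) :=
        tendsto_inv₀_cobounded'
      have h2 := hgL.comp h1
      refine h2.congr (fun z => ?_)
      simp only [Function.comp_apply, hgdef, inv_inv]
    -- at most one pole
    have hP2 : ∀ p ∈ P, ∀ q ∈ P, p = q := by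
      intro p hp q hq
      by_contra hpq
      set r := min (min (ε p) (ε q)) (dist p q / 2) with hrdef
      have hdpq : 0 < dist p q := dist_pos.2 hpq
      have hr0 : 0 < r := by
        rw [hrdef]
        simp only [lt_min_iff]
        exact ⟨⟨hε0 p (hPS hp), hε0 q (hPS hq)⟩, by linarith⟩
      have hrp : r ≤ ε p := by
        rw [hrdef]
        exact le_trans (min_le_left _ _) (min_le_left _ _)
      have hrq : r ≤ ε q := by
        rw [hrdef]
        exact le_trans (min_le_left _ _) (min_le_right _ _)
      have hsubp : Metric.ball p r \ {p} ⊆ Sᶜ := by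
        intro z hz
        exact hεS p (hPS hp) ⟨Metric.ball_subset_ball hrp hz.1, hz.2⟩
      have hsubq : Metric.ball q r \ {q} ⊆ Sᶜ := by
        intro z hz
        exact hεS q (hPS hq) ⟨Metric.ball_subset_ball hrq hz.1, hz.2⟩
      obtain ⟨M₁, hM₁⟩ := pole_surj Metric.isOpen_ball (Metric.mem_ball_self hr0)
        (hFdiff.mono (fun z hz => hScPc (hsubp hz))) (hFpole p hp)
      obtain ⟨M₂, hM₂⟩ := pole_surj Metric.isOpen_ball (Metric.mem_ball_self hr0)
        (hFdiff.mono (fun z hz => hScPc (hsubq hz))) (hFpole q hq)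
      set v : ℂ := ((max (max M₁ M₂) 0 + 1 : ℝ) : ℂ) with hvdef
      have hvnorm : ‖v‖ = max (max M₁ M₂) 0 + 1 := by
        rw [hvdef, Complex.norm_real, Real.norm_eq_abs, abs_of_pos]
        have : (0:ℝ) ≤ max (max M₁ M₂) 0 := le_max_right _ _
        linarith
      have hv1 : M₁ < ‖v‖ := by
        rw [hvnorm]
        have : M₁ ≤ max (max M₁ M₂) 0 := le_trans (le_max_left _ _) (le_max_left _ _)
        linarith
      have hv2 : M₂ < ‖v‖ := by
        rw [hvnorm]
        have : M₂ ≤ max (max M₁ M₂) 0 := le_trans (le_max_right _ _) (le_max_left _ _)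
        linarith
      obtain ⟨z₁, hz₁, hz₁v⟩ := hM₁ v hv1
      obtain ⟨z₂, hz₂, hz₂v⟩ := hM₂ v hv2
      have hne12 : z₁ ≠ z₂ := by
        intro h
        have d1 : dist p z₁ < r := by
          have := hz₁.1; rwa [Metric.mem_ball, dist_comm] at this
        have d2 : dist z₂ q < r := Metric.mem_ball.1 hz₂.1
        have : dist p q ≤ dist p z₁ + dist z₁ q := dist_triangle _ _ _
        rw [h] at this
        have hrle : r ≤ dist p q / 2 := by rw [hrdef]; exact min_le_right _ _
        have : dist p q < r + r := by
          calc dist p q ≤ dist p z₂ + dist z₂ q := dist_triangle _ _ _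
            _ < r + r := add_lt_add (by rw [← h]; exact d1) d2
        linarith
      exact hne12 (hFinj (hScPc (hsubp hz₁)) (hScPc (hsubq hz₂)) (hz₁v.trans hz₂v.symm))
    rcases Set.eq_empty_or_nonempty P with hPe | ⟨p, hp⟩
    · -- no poles at all : F is a bounded entire function, contradiction
      exfalso
      have hFe : Differentiable ℂ F := by
        rw [← differentiableOn_univ]
        have := hFdiff
        rw [hPe] at this
        simpa using this
      have hFI : Function.Injective F := by
        have := hFinj
        rw [hPe] at this
        simp only [Set.compl_empty] at this
        exact Set.injOn_univ.1 this
      have hb : Bornology.IsBounded (Set.range F) := by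
        have h1 : ∀ᶠ z : ℂ in cobounded ℂ, ‖F z‖ < ‖L‖ + 1 :=
          hFtendL.norm.eventually (gt_mem_nhds (by linarith [norm_nonneg L] : ‖L‖ < ‖L‖ + 1))
        obtain ⟨R, hR⟩ := eventually_cobounded_iff.1 h1
        obtain ⟨C₂, hC₂⟩ := (isCompact_closedBall (0:ℂ) (max R 0)).exists_bound_of_continuousOn
          hFe.continuous.continuousOn
        refine isBounded_iff_forall_norm_le.2 ⟨max C₂ (‖L‖ + 1), ?_⟩
        rintro - ⟨z, rfl⟩
        by_cases hz : ‖z‖ ≤ max R 0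
        · exact le_trans (hC₂ z (by simpa [Metric.mem_closedBall, dist_eq_norm] using hz))
            (le_max_left _ _)
        · push_neg at hz
          have : R ≤ ‖z‖ := le_of_lt (lt_of_le_of_lt (le_max_left _ _) hz)
          exact le_trans (le_of_lt (hR z this)) (le_max_right _ _)
      have h01 : (0:ℂ) = 1 := hFI (hFe.apply_eq_apply_of_bounded hb 0 1)
      simp at h01
    · -- exactly one pole p
      have hPp : P = {p} := Set.eq_singleton_iff_unique_mem.2 ⟨hp, fun q hq => hP2 q hq p hp⟩
      have hPc : Pᶜ = {p}ᶜ := by rw [hPp]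
      have hFdiffAt : ∀ z : ℂ, z ≠ p → DifferentiableAt ℂ F z := fun z hz =>
        hFdiff.differentiableAt (hPo.mem_nhds (by rw [hPc]; exact hz))
      set H : ℂ → ℂ := fun w => if w = 0 then L else F (p + w⁻¹) with hHdef
      have hH0 : H 0 = L := if_pos rfl
      have hHne : ∀ w : ℂ, w ≠ 0 → H w = F (p + w⁻¹) := by
        intro w hw
        rw [hHdef]
        simp only
        rw [if_neg hw]
      have hmemPc : ∀ w : ℂ, w ≠ 0 → p + w⁻¹ ∈ Pᶜ := by
        intro w hw
        rw [hPc]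
        simp only [Set.mem_compl_iff, Set.mem_singleton_iff]
        intro h
        exact inv_ne_zero hw (add_eq_left.1 h)
      have hHd : Differentiable ℂ H := by
        rw [← differentiableOn_univ,
          ← Complex.differentiableOn_compl_singleton_and_continuousAt_iff
            (Filter.univ_mem : (Set.univ : Set ℂ) ∈ 𝓝 (0:ℂ))]
      
        constructor
        · intro w hw
          have hw0 : w ≠ 0 := hw.2
          have hne : p + w⁻¹ ≠ p := by
            intro h
            exact inv_ne_zero hw0 (add_eq_left.1 h)
          have h1 : DifferentiableAt ℂ (fun w : ℂ => F (p + w⁻¹)) w :=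
            (hFdiffAt _ hne).comp w ((differentiableAt_const p).add (differentiableAt_inv hw0))
          refine (h1.congr_of_eventuallyEq ?_).differentiableWithinAt
          filter_upwards [isOpen_ne.mem_nhds hw0] with x hx
          exact hHne x hx
        · rw [ContinuousAt, hH0, ← nhdsNE_sup_pure]
          refine Filter.Tendsto.sup ?_ (by rw [← hH0]; exact tendsto_pure_nhds H 0)
          have hcomp : Tendsto (fun w : ℂ => p + w⁻¹) (𝓝[≠] (0:ℂ)) (cobounded ℂ) := by
            rw [tendsto_cobounded_iff]
            intro M
            have h2 := tendsto_cobounded_iff.1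
              (tendsto_inv₀_nhdsNE_zero (α := ℂ)) (M + ‖p‖)
            filter_upwards [h2] with w hw
            have h3 : ‖w⁻¹‖ ≤ ‖p + w⁻¹‖ + ‖p‖ := by
              calc ‖w⁻¹‖ = ‖(p + w⁻¹) - p‖ := by ring_nf
                _ ≤ ‖p + w⁻¹‖ + ‖p‖ := norm_sub_le _ _
            linarith
          have h3 := hFtendL.comp hcomp
          refine h3.congr' ?_
          filter_upwards [self_mem_nhdsWithin] with w hw
          exact (hHne w hw).symm
      have hHinj : Function.Injective H := by
        rw [← Set.injOn_univ]
        apply injOn_of_injOn_diff_finite isOpen_univ (Set.finite_singleton 0)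
          hHd.differentiableOn
        intro w₁ hw₁ w₂ hw₂ he
        have hw₁0 : w₁ ≠ 0 := hw₁.2
        have hw₂0 : w₂ ≠ 0 := hw₂.2
        rw [hHne w₁ hw₁0, hHne w₂ hw₂0] at he
        have h1 := hFinj (hmemPc w₁ hw₁0) (hmemPc w₂ hw₂0) he
        have h2 : w₁⁻¹ = w₂⁻¹ := add_left_cancel h1
        exact inv_injective h2
      have hHcob : Tendsto H (cobounded ℂ) (cobounded ℂ) := by
        have hc1 : Tendsto (fun w : ℂ => p + w⁻¹) (cobounded ℂ) (𝓝[≠] p) := by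
          rw [tendsto_nhdsWithin_iff]
          constructor
          · have : Tendsto (fun w : ℂ => p + w⁻¹) (cobounded ℂ) (𝓝 (p + 0)) :=
              tendsto_const_nhds.add tendsto_inv₀_cobounded
            simpa using this
          · filter_upwards [hevne] with w hw
            simp only [Set.mem_compl_iff, Set.mem_singleton_iff]
            intro h
            exact inv_ne_zero hw (add_eq_left.1 h)
        have h2 := (hFpole p hp).comp hc1
        refine h2.congr' ?_
        filter_upwards [hevne] with w hw
        exact (hHne w hw).symm
      obtain ⟨a', b', ha', hab'⟩ := entire_injective_cobounded_affine hHd hHinj hHcob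
      refine ⟨b', a' - b' * p, 1, -p, ?_, ?_⟩
      · intro h
        apply ha'
        linear_combination -h
      · intro z hz
        have hzp : z ≠ p := fun h => hz (by rw [h]; exact hPS hp)
        have hzp' : z - p ≠ 0 := sub_ne_zero.2 hzp
        have hden : 1 * z + -p ≠ 0 := by
          rw [one_mul, ← sub_eq_add_neg]
          exact hzp'
        refine ⟨hden, ?_⟩
        have hw0 : (z - p)⁻¹ ≠ 0 := inv_ne_zero hzp'
        have h1 : H (z - p)⁻¹ = a' * (z - p)⁻¹ + b' := hab' _
        have h2 : H (z - p)⁻¹ = F z := by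
          rw [hHne _ hw0, inv_inv]
          ring_nf
        have h3 : f z = F z := (hFf z hz).symm
        rw [h3, ← h2, h1]
        rw [one_mul, ← sub_eq_add_neg]
        field_simp
        ring
  · -- pole at infinity
    have hPe : P = ∅ := by
      by_contra hne
      obtain ⟨p, hp⟩ := Set.nonempty_iff_ne_empty.2 hne
      have hpS := hPS hp
      have hpR : ‖p‖ < R₀ := hSR₀ p hpS
      set εp := min (ε p) (R₀ - ‖p‖) with hεpdef
      have hεp0 : 0 < εp := by
        rw [hεpdef]
        simp only [lt_min_iff]
        exact ⟨hε0 p hpS, by linarith⟩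
      have hrp : εp ≤ ε p := by rw [hεpdef]; exact min_le_left _ _
      have hsubp : Metric.ball p εp \ {p} ⊆ Sᶜ := by
        intro z hz
        exact hεS p hpS ⟨Metric.ball_subset_ball hrp hz.1, hz.2⟩
      have hsubR : ∀ z ∈ Metric.ball p εp, ‖z‖ < R₀ := by
        intro z hz
        have h1 : dist z p < εp := Metric.mem_ball.1 hz
        have h2 : ‖z‖ ≤ ‖p‖ + dist z p := by
          rw [dist_eq_norm]
          calc ‖z‖ = ‖p + (z - p)‖ := by ring_nf
            _ ≤ ‖p‖ + ‖z - p‖ := norm_add_le _ _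
        have h3 : εp ≤ R₀ - ‖p‖ := by rw [hεpdef]; exact min_le_right _ _
        linarith
      obtain ⟨M₁, hM₁⟩ := pole_surj Metric.isOpen_ball (Metric.mem_ball_self hεp0)
        (hFdiff.mono (fun z hz => hScPc (hsubp hz))) (hFpole p hp)
      obtain ⟨M₂, hM₂⟩ := pole_surj Metric.isOpen_ball hU₀0 hgd hgpole
      set v : ℂ := ((max (max M₁ M₂) 0 + 1 : ℝ) : ℂ) with hvdef
      have hvnorm : ‖v‖ = max (max M₁ M₂) 0 + 1 := by
        rw [hvdef, Complex.norm_real, Real.norm_eq_abs, abs_of_pos]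
        have : (0:ℝ) ≤ max (max M₁ M₂) 0 := le_max_right _ _
        linarith
      have hv1 : M₁ < ‖v‖ := by
        rw [hvnorm]
        have : M₁ ≤ max (max M₁ M₂) 0 := le_trans (le_max_left _ _) (le_max_left _ _)
        linarith
      have hv2 : M₂ < ‖v‖ := by
        rw [hvnorm]
        have : M₂ ≤ max (max M₁ M₂) 0 := le_trans (le_max_right _ _) (le_max_left _ _)
        linarith
      obtain ⟨z₁, hz₁, hz₁v⟩ := hM₁ v hv1
      obtain ⟨w, hw, hwv⟩ := hM₂ v hv2
      have hz₂ := hU₀inv w hw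
      have hne12 : z₁ ≠ w⁻¹ := by
        intro h
        have h1 : ‖z₁‖ < R₀ := hsubR z₁ hz₁.1
        rw [h] at h1
        linarith [hz₂.2]
      exact hne12 (hFinj (hScPc (hsubp hz₁)) (hScPc hz₂.1) (hz₁v.trans hwv.symm))
    have hFe : Differentiable ℂ F := by
      rw [← differentiableOn_univ]
      have := hFdiff
      rw [hPe] at this
      simpa using this
    have hFI : Function.Injective F := by
      have := hFinj
      rw [hPe] at this
      simp only [Set.compl_empty] at this
      exact Set.injOn_univ.1 this
    have hFcob : Tendsto F (cobounded ℂ) (cobounded ℂ) := by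
      rw [tendsto_cobounded_iff]
      intro M
      obtain ⟨δ, hδ0, hδ⟩ := Metric.mem_nhdsWithin_iff.1 (tendsto_cobounded_iff.1 hgpole M)
      rw [eventually_cobounded_iff]
      refine ⟨max δ⁻¹ 0 + 1, ?_⟩
      intro z hz
      have hz1 : (1:ℝ) ≤ ‖z‖ := by
        have : (0:ℝ) ≤ max δ⁻¹ 0 := le_max_right _ _
        linarith
      have hz0 : z ≠ 0 := by
        intro h
        rw [h] at hz1
        simp at hz1
        linarith
      have hnz : 0 < ‖z‖ := by linarith
      have hzδ : δ⁻¹ < ‖z‖ := by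
        have : δ⁻¹ ≤ max δ⁻¹ 0 := le_max_left _ _
        linarith
      have hwδ : ‖z⁻¹‖ < δ := by
        rw [norm_inv]
        exact (inv_lt_comm₀ hδ0 hnz).1 hzδ
      have hmem : z⁻¹ ∈ Metric.ball (0:ℂ) δ ∩ {(0:ℂ)}ᶜ :=
        ⟨by simpa [Metric.mem_ball, dist_eq_norm] using hwδ, inv_ne_zero hz0⟩
      have := hδ hmem
      simp only [Set.mem_setOf_eq, hgdef, inv_inv] at this
      exact this
    obtain ⟨a, b, ha, hab⟩ := entire_injective_cobounded_affine hFe hFI hFcob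
    refine ⟨a, b, 0, 1, by simpa using ha, ?_⟩
    intro z hz
    refine ⟨by simp, ?_⟩
    rw [← hFf z hz, hab z]
    simp
end
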